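/- If a channel P_{Y|X} satisfies ε-local differential identifiability (P_{X|Y=y}(x)/P_{X|Y=y}(x') ≤ e^ε for all y ∈ supp(P_Y) and x,x' ∈ supp(P_X)), then for all y ∈ supp(P_Y), ℓ(X→y) ≤ log(1/(p_min·(1 + e^{−ε}(|supp(P_X)| − 1)))), where p_min = min_{x∈supp(P_X)} P_X(x). -/
import Mathlib


/-- ε-local differential identifiability implies
ℓ(X→y) ≤ log(1/(p_min·(1 + e^{−ε}(|supp(P_X)| − 1)))). -/
theorem stmt_15 {α β : Type*} [Fintype α] [Fintype β]
    (pX : α → ℝ) (hpX : ∀ x, 0 ≤ pX x) (hXsum : ∑ x, pX x = 1)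
    (W : α → β → ℝ) (hW : ∀ x y, 0 ≤ W x y) (hWsum : ∀ x, ∑ y, W x y = 1)
    (pY : β → ℝ) (hpY : ∀ y, pY y = ∑ x, W x y * pX x)
    (sX : Finset α) (hsX : ∀ x, x ∈ sX ↔ 0 < pX x) (hneX : sX.Nonempty)
    (ε : ℝ) (hε : 0 ≤ ε)
    (hLDI : ∀ y, 0 < pY y → ∀ x ∈ sX, ∀ x' ∈ sX,
      W x y * pX x ≤ Real.exp ε * (W x' y * pX x')) :
    ∀ y, 0 < pY y →
      Real.log (sX.sup' hneX fun x => W x y / pY y) ≤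
        Real.log (1 / (sX.inf' hneX pX *
          (1 + Real.exp (-ε) * ((sX.card : ℝ) - 1)))) := by
  classical
  classical
  intro y hy
  set D := 1 + Real.exp (-ε) * ((sX.card : ℝ) - 1) with hDdef
  have hcard : 1 ≤ (sX.card : ℝ) := by
    exact_mod_cast Finset.card_pos.mpr hneX
  have hexp := (Real.exp_pos (-ε)).le
  have hD : 0 < D := by
    have : 0 ≤ Real.exp (-ε) * ((sX.card : ℝ) - 1) := by nlinarith
    linarith
  have hpm : 0 < sX.inf' hneX pX := by
    obtain ⟨x, hx, hxe⟩ := Finset.exists_mem_eq_inf' hneX pX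
    rw [hxe]; exact (hsX x).1 hx
  have key : ∀ x ∈ sX, W x y / pY y ≤ 1 / (sX.inf' hneX pX * D) := by
    intro x hx
    have hpx : 0 < pX x := (hsX x).1 hx
    have hsum : W x y * pX x * D ≤ pY y := by
      have h1 : ∑ x' ∈ sX, W x' y * pX x' ≤ pY y := by
        rw [hpY]
        apply Finset.sum_le_sum_of_subset_of_nonneg (Finset.subset_univ _)
        intro i _ _
        exact mul_nonneg (hW i y) (hpX i)
      have h2 : ∀ x' ∈ sX.erase x, Real.exp (-ε) * (W x y * pX x) ≤ W x' y * pX x' := by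
        intro x' hx'
        have h := hLDI y hy x hx x' (Finset.mem_of_mem_erase hx')
        rw [Real.exp_neg, inv_mul_le_iff₀ (Real.exp_pos ε)]
        linarith
      have h4 : ∑ _x' ∈ sX.erase x, Real.exp (-ε) * (W x y * pX x) ≤
          ∑ x' ∈ sX.erase x, W x' y * pX x' := Finset.sum_le_sum h2
      rw [Finset.sum_const, nsmul_eq_mul, Finset.card_erase_of_mem hx] at h4
      have hc1 : 1 ≤ sX.card := Finset.card_pos.mpr hneX
      have h5 : ((sX.card - 1 : ℕ) : ℝ) = (sX.card : ℝ) - 1 := by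
        push_cast [Nat.cast_sub hc1]; ring
      rw [h5] at h4
      have h6 : ∑ x' ∈ sX.erase x, W x' y * pX x' + W x y * pX x
          = ∑ x' ∈ sX, W x' y * pX x' :=
        Finset.sum_erase_add sX (fun x' => W x' y * pX x') hx
      have hWp : 0 ≤ W x y * pX x := mul_nonneg (hW x y) (hpX x)
      rw [hDdef]; nlinarith [h1, h4, h6]
    have hinf : sX.inf' hneX pX ≤ pX x := Finset.inf'_le _ hx
    rw [div_le_div_iff₀ hy (by positivity)]
    have hWn : 0 ≤ W x y := hW x y
    nlinarith
  have hsup : sX.sup' hneX (fun x => W x y / pY y) ≤ 1 / (sX.inf' hneX pX * D) :=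
    Finset.sup'_le _ _ key
  have hex : ∃ x, 0 < W x y * pX x := by
    by_contra h
    push_neg at h
    have : pY y ≤ 0 := by
      rw [hpY]
      exact Finset.sum_nonpos fun i _ => h i
    linarith
  obtain ⟨x, hx⟩ := hex
  have hpx : 0 < pX x := by nlinarith [hW x y, hpX x]
  have hWx : 0 < W x y := by nlinarith [hW x y, hpX x]
  have hmem : x ∈ sX := (hsX x).2 hpx
  have hpos : 0 < sX.sup' hneX (fun x => W x y / pY y) :=
    lt_of_lt_of_le (div_pos hWx hy) (Finset.le_sup' (fun x => W x y / pY y) hmem)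
  exact Real.log_le_log hpos hsup
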